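/- arXiv:1411.0846 — 6 statements merged into one kernel-verified Lean document; each statement's English description precedes it below -/
import Mathlib

section
/- For every real r > 0 one has 0 < (r·cosh r − sinh r)/(sinh r)^3 ≤ 1/3, the supremum over r > 0 of (r·cosh r − sinh r)/(sinh r)^3 equals 1/3 (attained in the limit r → 0), and the infimum equals 0. -/
open Real Set Filter

private lemma hdA (x : ℝ) : HasDerivAt (fun x : ℝ => x * Real.cosh x - Real.sinh x)
    (x * Real.sinh x) x := by
  have h1 : HasDerivAt (fun x : ℝ => x * Real.cosh x)
      (1 * Real.cosh x + x * Real.sinh x) x :=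
    (hasDerivAt_id x).mul (Real.hasDerivAt_cosh x)
  have := h1.sub (Real.hasDerivAt_sinh x)
  refine this.congr_deriv ?_
  ring

private lemma num_pos {r : ℝ} (hr : 0 < r) : 0 < r * Real.cosh r - Real.sinh r := by
  have hmono : StrictMonoOn (fun x : ℝ => x * Real.cosh x - Real.sinh x) (Set.Ici 0) := by
    apply strictMonoOn_of_deriv_pos (convex_Ici 0)
    · exact Continuous.continuousOn (by continuity)
    · intro x hx
      rw [interior_Ici] at hx
      rw [(hdA x).deriv]
      exact mul_pos hx (Real.sinh_pos_iff.2 hx)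
  have := hmono (Set.self_mem_Ici) (Set.mem_Ici.2 hr.le) hr
  simpa using this

private lemma hdG (x : ℝ) : HasDerivAt
    (fun x : ℝ => Real.sinh x ^ 3 - 3 * (x * Real.cosh x - Real.sinh x))
    (3 * Real.sinh x * (Real.sinh x * Real.cosh x - x)) x := by
  have h1 : HasDerivAt (fun x : ℝ => Real.sinh x ^ 3)
      (3 * Real.sinh x ^ 2 * Real.cosh x) x := by
    have := (Real.hasDerivAt_sinh x).pow 3
    refine this.congr_deriv ?_
    norm_num
  have := h1.sub ((hdA x).const_mul 3)
  refine this.congr_deriv ?_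
  have hc := Real.cosh_sq x
  nlinarith [Real.sinh_sq x]

private lemma key_ineq {r : ℝ} (hr : 0 < r) :
    3 * (r * Real.cosh r - Real.sinh r) ≤ Real.sinh r ^ 3 := by
  have hmono : StrictMonoOn
      (fun x : ℝ => Real.sinh x ^ 3 - 3 * (x * Real.cosh x - Real.sinh x)) (Set.Ici 0) := by
    apply strictMonoOn_of_deriv_pos (convex_Ici 0)
    · exact Continuous.continuousOn (by continuity)
    · intro x hx
      rw [interior_Ici] at hx
      rw [(hdG x).deriv]
      have hx0 : (0:ℝ) < x := hx
      have hs := Real.sinh_pos_iff.2 hx0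
      have h2 : x < Real.sinh x * Real.cosh x := by
        have := Real.self_lt_sinh_iff.2 (by linarith : (0:ℝ) < 2 * x)
        rw [Real.sinh_two_mul] at this
        nlinarith
      nlinarith [mul_pos hs (sub_pos.2 h2)]
  have := hmono (Set.self_mem_Ici) (Set.mem_Ici.2 hr.le) hr
  simp only [Real.sinh_zero] at this
  nlinarith

private lemma slope_sinh : Filter.Tendsto (fun x : ℝ => Real.sinh x / x)
    (nhdsWithin 0 (Set.Ioi 0)) (nhds 1) := by
  have h := (Real.hasDerivAt_sinh 0)
  rw [hasDerivAt_iff_tendsto_slope] at h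
  simp only [Real.cosh_zero] at h
  have h2 : Filter.Tendsto (slope Real.sinh 0) (nhdsWithin 0 (Set.Ioi 0)) (nhds 1) :=
    h.mono_left (nhdsWithin_mono 0 (fun x hx => Set.mem_compl_singleton_iff.2 (ne_of_gt hx)))
  refine h2.congr' ?_
  filter_upwards [self_mem_nhdsWithin] with x hx
  simp [slope_def_field, div_eq_iff (ne_of_gt (Set.mem_Ioi.1 hx))]

private lemma tendsto_zero_right : Filter.Tendsto
    (fun r : ℝ => (r * Real.cosh r - Real.sinh r) / (Real.sinh r) ^ 3)
    (nhdsWithin 0 (Set.Ioi 0)) (nhds (1 / 3)) := by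
  -- first factor : (r cosh r - sinh r)/r^3 → 1/3 via L'Hopital
  have hfac1 : Filter.Tendsto (fun r : ℝ => (r * Real.cosh r - Real.sinh r) / r ^ 3)
      (nhdsWithin 0 (Set.Ioi 0)) (nhds (1 / 3)) := by
    apply HasDerivAt.lhopital_zero_right_on_Ioo (a := 0) (b := 1) one_pos
      (f' := fun x => x * Real.sinh x) (g' := fun x => 3 * x ^ 2)
    · intro x _; exact hdA x
    · intro x _
      simpa using (hasDerivAt_pow 3 x)
    · intro x hx
      have : (0:ℝ) < x := hx.1
      positivity
    · have : Filter.Tendsto (fun x : ℝ => x * Real.cosh x - Real.sinh x) (nhds 0) (nhds 0) := by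
        have : Continuous (fun x : ℝ => x * Real.cosh x - Real.sinh x) := by continuity
        simpa using this.tendsto 0
      exact this.mono_left nhdsWithin_le_nhds
    · have : Filter.Tendsto (fun x : ℝ => x ^ 3) (nhds 0) (nhds 0) := by
        have : Continuous (fun x : ℝ => x ^ 3) := by continuity
        simpa using this.tendsto 0
      exact this.mono_left nhdsWithin_le_nhds
    · have h1 : Filter.Tendsto (fun x : ℝ => (1/3) * (Real.sinh x / x))
          (nhdsWithin 0 (Set.Ioi 0)) (nhds ((1/3) * 1)) := slope_sinh.const_mul _
      rw [mul_one] at h1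
      refine h1.congr' ?_
      filter_upwards [self_mem_nhdsWithin] with x hx
      have hx0 : x ≠ 0 := ne_of_gt (Set.mem_Ioi.1 hx)
      field_simp
  -- second factor : (x / sinh x)^3 → 1
  have hfac2 : Filter.Tendsto (fun r : ℝ => (r / Real.sinh r) ^ 3)
      (nhdsWithin 0 (Set.Ioi 0)) (nhds 1) := by
    have hinv : Filter.Tendsto (fun r : ℝ => r / Real.sinh r)
        (nhdsWithin 0 (Set.Ioi 0)) (nhds 1) := by
      have := slope_sinh.inv₀ (by norm_num)
      simp only [inv_one] at this
      refine this.congr' ?_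
      filter_upwards [self_mem_nhdsWithin] with x hx
      rw [inv_div]
    have := hinv.pow 3
    simpa using this
  have hprod := hfac1.mul hfac2
  rw [mul_one] at hprod
  refine hprod.congr' ?_
  filter_upwards [self_mem_nhdsWithin] with x hx
  have hx0 : (0:ℝ) < x := Set.mem_Ioi.1 hx
  have hs : (0:ℝ) < Real.sinh x := Real.sinh_pos_iff.2 hx0
  field_simp

private lemma tendsto_atTop_zero : Filter.Tendsto
    (fun r : ℝ => (r * Real.cosh r - Real.sinh r) / (Real.sinh r) ^ 3)
    Filter.atTop (nhds 0) := by
  have hbound : Filter.Tendsto (fun r : ℝ => 2 / r) Filter.atTop (nhds 0) :=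
    Filter.Tendsto.div_atTop tendsto_const_nhds Filter.tendsto_id
  apply tendsto_of_tendsto_of_tendsto_of_le_of_le' tendsto_const_nhds hbound
  · filter_upwards [Filter.eventually_ge_atTop (1:ℝ)] with r hr
    have hr0 : (0:ℝ) < r := by linarith
    have hs : (0:ℝ) < Real.sinh r := Real.sinh_pos_iff.2 hr0
    exact le_of_lt (div_pos (num_pos hr0) (by positivity))
  · filter_upwards [Filter.eventually_ge_atTop (1:ℝ)] with r hr
    have hr0 : (0:ℝ) < r := by linarith
    have hs : (0:ℝ) < Real.sinh r := Real.sinh_pos_iff.2 hr0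
    have hrs : r ≤ Real.sinh r := le_of_lt (Real.self_lt_sinh_iff.2 hr0)
    have h1s : (1:ℝ) ≤ Real.sinh r := by
      have := Real.self_lt_sinh_iff.2 one_pos
      have := Real.sinh_le_sinh.2 hr
      -- sinh 1 ≤ sinh r  and 1 < sinh 1
      nlinarith [Real.self_lt_sinh_iff.2 one_pos, Real.sinh_lt_sinh.2 (lt_of_lt_of_le (by norm_num : (0:ℝ) < 1) hr)]
    have hcosh : Real.cosh r ≤ 2 * Real.sinh r := by
      have := Real.cosh_sub_sinh r
      have hexp : Real.exp (-r) ≤ 1 := Real.exp_le_one_iff.2 (by linarith)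
      linarith
    rw [div_le_div_iff₀ (by positivity) hr0]
    have hA : r * Real.cosh r - Real.sinh r ≤ 2 * Real.sinh r ^ 2 := by
      nlinarith
    nlinarith [pow_le_pow_left₀ hr0.le hrs 3, sq_nonneg (Real.sinh r)]

theorem stmt_1 :
    (∀ r : ℝ, 0 < r →
      0 < (r * Real.cosh r - Real.sinh r) / (Real.sinh r) ^ 3 ∧
      (r * Real.cosh r - Real.sinh r) / (Real.sinh r) ^ 3 ≤ 1 / 3) ∧
    sSup ((fun r : ℝ => (r * Real.cosh r - Real.sinh r) / (Real.sinh r) ^ 3) '' Set.Ioi 0)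
      = 1 / 3 ∧
    Filter.Tendsto (fun r : ℝ => (r * Real.cosh r - Real.sinh r) / (Real.sinh r) ^ 3)
      (nhdsWithin 0 (Set.Ioi 0)) (nhds (1 / 3)) ∧
    sInf ((fun r : ℝ => (r * Real.cosh r - Real.sinh r) / (Real.sinh r) ^ 3) '' Set.Ioi 0)
      = 0 := by
  set f : ℝ → ℝ := fun r => (r * Real.cosh r - Real.sinh r) / (Real.sinh r) ^ 3 with hf
  have hmain : ∀ r : ℝ, 0 < r → 0 < f r ∧ f r ≤ 1/3 := by
    intro r hr
    have hs : (0:ℝ) < Real.sinh r := Real.sinh_pos_iff.2 hr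
    constructor
    · exact div_pos (num_pos hr) (by positivity)
    · rw [div_le_div_iff₀ (by positivity) (by norm_num : (0:ℝ) < 3)]
      have := key_ineq hr
      linarith
  have hne : ((f '' Set.Ioi 0)).Nonempty := ⟨f 1, 1, Set.mem_Ioi.2 one_pos, rfl⟩
  have hbdd : BddAbove (f '' Set.Ioi 0) := by
    refine ⟨1/3, ?_⟩
    rintro y ⟨r, hr, rfl⟩
    exact (hmain r hr).2
  have hbddb : BddBelow (f '' Set.Ioi 0) := by
    refine ⟨0, ?_⟩
    rintro y ⟨r, hr, rfl⟩
    exact (hmain r hr).1.le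
  refine ⟨hmain, ?_, tendsto_zero_right, ?_⟩
  · apply le_antisymm
    · apply csSup_le hne
      rintro y ⟨r, hr, rfl⟩
      exact (hmain r hr).2
    · refine le_of_tendsto tendsto_zero_right ?_
      filter_upwards [self_mem_nhdsWithin] with x hx
      exact le_csSup hbdd ⟨x, hx, rfl⟩
  · apply le_antisymm
    · refine ge_of_tendsto tendsto_atTop_zero ?_
      filter_upwards [Filter.eventually_gt_atTop (0:ℝ)] with r hr
      exact csInf_le hbddb ⟨r, hr, rfl⟩
    · apply le_csInf hne
      rintro y ⟨r, hr, rfl⟩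
      exact (hmain r hr).1.le
end

section
/- For every integer n ≥ 2 and every real r ≥ 0, (2n−2)·r²·cosh²r + n·r² − (3n−4)·r·cosh r·sinh r − 2·sinh²r ≥ 0. -/
open Real

private lemma aux_nonneg (f f' : ℝ → ℝ) (hd : ∀ x, HasDerivAt f (f' x) x)
    (h0 : f 0 = 0) (hf' : ∀ x, 0 ≤ x → 0 ≤ f' x) : ∀ r, 0 ≤ r → 0 ≤ f r := by
  intro r hr
  have hdiff : Differentiable ℝ f := fun x => (hd x).differentiableAt
  have hm : MonotoneOn f (Set.Ici 0) := by
    apply monotoneOn_of_deriv_nonneg (convex_Ici 0) hdiff.continuous.continuousOn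
    · intro x _; exact (hdiff x).differentiableWithinAt
    · intro x hx
      rw [interior_Ici] at hx
      rw [(hd x).deriv]; exact hf' x hx.le
  have h := hm Set.self_mem_Ici (Set.mem_Ici.2 hr) hr
  rw [h0] at h; exact h

private lemma keyK : ∀ t : ℝ, 0 ≤ t → Real.sinh t ≤ t * Real.cosh t := by
  have := aux_nonneg (fun t => t * Real.cosh t - Real.sinh t)
      (fun t => t * Real.sinh t)
      (fun x => by
        have h1 : HasDerivAt (fun t : ℝ => t * Real.cosh t)
            (1 * Real.cosh x + x * Real.sinh x) x :=
          (hasDerivAt_id x).mul (Real.hasDerivAt_cosh x)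
        have h2 := h1.sub (Real.hasDerivAt_sinh x)
        exact h2.congr_deriv (by ring))
      (by simp)
      (fun x hx => mul_nonneg hx (Real.sinh_nonneg_iff.2 hx))
  intro t ht
  have h := this t ht
  linarith

private lemma lemG : ∀ t : ℝ, 0 ≤ t → 0 ≤ t * Real.sinh t + 2 - 2 * Real.cosh t := by
  exact aux_nonneg (fun t => t * Real.sinh t + 2 - 2 * Real.cosh t)
      (fun t => t * Real.cosh t - Real.sinh t)
      (fun x => by
        have h1 : HasDerivAt (fun t : ℝ => t * Real.sinh t)
            (1 * Real.sinh x + x * Real.cosh x) x :=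
          (hasDerivAt_id x).mul (Real.hasDerivAt_sinh x)
        have h2 := (h1.add_const 2).sub ((Real.hasDerivAt_cosh x).const_mul 2)
        exact h2.congr_deriv (by ring))
      (by simp)
      (fun x hx => by linarith [keyK x hx])

private lemma lemH : ∀ t : ℝ, 0 ≤ t → 0 ≤ t * Real.cosh t + 2 * t - 3 * Real.sinh t := by
  exact aux_nonneg (fun t => t * Real.cosh t + 2 * t - 3 * Real.sinh t)
      (fun t => t * Real.sinh t + 2 - 2 * Real.cosh t)
      (fun x => by
        have h1 : HasDerivAt (fun t : ℝ => t * Real.cosh t)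
            (1 * Real.cosh x + x * Real.sinh x) x :=
          (hasDerivAt_id x).mul (Real.hasDerivAt_cosh x)
        have h2 := (h1.add ((hasDerivAt_id x).const_mul 2)).sub
          ((Real.hasDerivAt_sinh x).const_mul 3)
        exact h2.congr_deriv (by ring))
      (by simp)
      (fun x hx => lemG x hx)

-- P'' chain
private lemma lemP2 : ∀ t : ℝ, 0 ≤ t →
    0 ≤ 2 * t * Real.sinh t + t ^ 2 * Real.cosh t + 6 - 6 * Real.cosh t := by
  exact aux_nonneg _
      (fun t => t ^ 2 * Real.sinh t + 4 * t * Real.cosh t - 4 * Real.sinh t)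
      (fun x => by
        have h1 : HasDerivAt (fun t : ℝ => 2 * t * Real.sinh t)
            (2 * Real.sinh x + 2 * x * Real.cosh x) x := by
          have := ((hasDerivAt_id x).const_mul (2:ℝ)).mul (Real.hasDerivAt_sinh x)
          exact this.congr_deriv (by simp only [id_eq]; ring)
        have hsq : HasDerivAt (fun t : ℝ => t ^ 2) (2 * x) x := by
          simpa using (hasDerivAt_pow 2 x)
        have h2 : HasDerivAt (fun t : ℝ => t ^ 2 * Real.cosh t)
            (2 * x * Real.cosh x + x ^ 2 * Real.sinh x) x :=
          hsq.mul (Real.hasDerivAt_cosh x)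
        have h3 := ((h1.add h2).add_const 6).sub ((Real.hasDerivAt_cosh x).const_mul 6)
        exact h3.congr_deriv (by ring))
      (by norm_num)
      (fun x hx => by
        have hk := keyK x hx
        have hs := Real.sinh_nonneg_iff.2 hx
        nlinarith [sq_nonneg x])

private lemma lemP1 : ∀ t : ℝ, 0 ≤ t →
    0 ≤ t ^ 2 * Real.sinh t + 6 * t - 6 * Real.sinh t := by
  exact aux_nonneg _
      (fun t => 2 * t * Real.sinh t + t ^ 2 * Real.cosh t + 6 - 6 * Real.cosh t)
      (fun x => by
        have hsq : HasDerivAt (fun t : ℝ => t ^ 2) (2 * x) x := by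
          simpa using (hasDerivAt_pow 2 x)
        have h1 : HasDerivAt (fun t : ℝ => t ^ 2 * Real.sinh t)
            (2 * x * Real.sinh x + x ^ 2 * Real.cosh x) x :=
          hsq.mul (Real.hasDerivAt_sinh x)
        have h2 := (h1.add ((hasDerivAt_id x).const_mul 6)).sub
          ((Real.hasDerivAt_sinh x).const_mul 6)
        exact h2.congr_deriv (by ring))
      (by norm_num)
      (fun x hx => lemP2 x hx)

private lemma lemP : ∀ t : ℝ, 0 ≤ t →
    0 ≤ t ^ 2 * Real.cosh t + 3 * t ^ 2 - 2 * t * Real.sinh t - 4 * Real.cosh t + 4 := by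
  exact aux_nonneg _
      (fun t => t ^ 2 * Real.sinh t + 6 * t - 6 * Real.sinh t)
      (fun x => by
        have hsq : HasDerivAt (fun t : ℝ => t ^ 2) (2 * x) x := by
          simpa using (hasDerivAt_pow 2 x)
        have h1 : HasDerivAt (fun t : ℝ => t ^ 2 * Real.cosh t)
            (2 * x * Real.cosh x + x ^ 2 * Real.sinh x) x :=
          hsq.mul (Real.hasDerivAt_cosh x)
        have h2 : HasDerivAt (fun t : ℝ => 3 * t ^ 2) (3 * (2 * x)) x := hsq.const_mul 3
        have h3 : HasDerivAt (fun t : ℝ => 2 * t * Real.sinh t)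
            (2 * Real.sinh x + 2 * x * Real.cosh x) x := by
          have := ((hasDerivAt_id x).const_mul (2:ℝ)).mul (Real.hasDerivAt_sinh x)
          exact this.congr_deriv (by simp only [id_eq]; ring)
        have h4 := (((h1.add h2).sub h3).sub ((Real.hasDerivAt_cosh x).const_mul 4)).add_const 4
        exact h4.congr_deriv (by ring))
      (by norm_num)
      (fun x hx => lemP1 x hx)

theorem stmt_2 (n : ℕ) (hn : 2 ≤ n) (r : ℝ) (hr : 0 ≤ r) :
    0 ≤ (2 * (n : ℝ) - 2) * r ^ 2 * (Real.cosh r) ^ 2 + (n : ℝ) * r ^ 2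
        - (3 * (n : ℝ) - 4) * r * Real.cosh r * Real.sinh r - 2 * (Real.sinh r) ^ 2 := by
  set c := Real.cosh r
  set s := Real.sinh r
  have h2r : (0:ℝ) ≤ 2 * r := by linarith
  have hc2 : Real.cosh (2 * r) = c ^ 2 + s ^ 2 := Real.cosh_two_mul r
  have hid : c ^ 2 - s ^ 2 = 1 := Real.cosh_sq_sub_sinh_sq r
  have h3 : r ^ 2 * c ^ 2 - r ^ 2 * s ^ 2 = r ^ 2 := by linear_combination r ^ 2 * hid
  have hs2 : Real.sinh (2 * r) = 2 * s * c := Real.sinh_two_mul r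
  -- A ≥ 0 : from lemH at 2r, multiplied by (2r)/4
  have hH := lemH (2 * r) h2r
  rw [hc2, hs2] at hH
  have hA : 0 ≤ 2 * r ^ 2 * c ^ 2 + r ^ 2 - 3 * r * c * s := by
    have h0 := mul_nonneg hr hH
    nlinarith [h0, h3]
  -- F ≥ 0 : from lemP at 2r divided by 8
  have hP := lemP (2 * r) h2r
  rw [hc2, hs2] at hP
  have hF : 0 ≤ r ^ 2 * c ^ 2 + r ^ 2 - r * c * s - s ^ 2 := by nlinarith [hP, h3]
  have hn' : (2:ℝ) ≤ (n:ℝ) := by exact_mod_cast hn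
  nlinarith [mul_nonneg (by linarith : (0:ℝ) ≤ (n:ℝ) - 2) hA]
end

section
/- Let p > 1, M > 0, E_Q = ((p−1)/(2(p+1)))·M², and suppose x ∈ [0, M²] and E ∈ ℝ satisfy x/2 − M^{1−p}·x^{(p+1)/2}/(p+1) ≤ E ≤ E_Q. Then x ≤ (E/E_Q)·M². In particular there is no x with x = M² and E < E_Q. -/
theorem stmt_6 (p M x E : ℝ) (hp : 1 < p) (hM : 0 < M)
    (hx : x ∈ Set.Icc (0 : ℝ) (M ^ 2))
    (h1 : x / 2 - M ^ (1 - p) * x ^ ((p + 1) / 2) / (p + 1) ≤ E)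
    (h2 : E ≤ (p - 1) / (2 * (p + 1)) * M ^ 2) :
    x ≤ (E / ((p - 1) / (2 * (p + 1)) * M ^ 2)) * M ^ 2 ∧
    (x = M ^ 2 → ¬ E < (p - 1) / (2 * (p + 1)) * M ^ 2) := by
  obtain ⟨hx0, hxM⟩ := hx
  have hp1 : (0:ℝ) < p + 1 := by linarith
  have hpm : (0:ℝ) < p - 1 := by linarith
  -- key bound: x ^ ((p+1)/2) ≤ x * M ^ (p-1)
  have hxb : x ^ ((p + 1) / 2) ≤ x * M ^ (p - 1) := by
    rcases eq_or_lt_of_le hx0 with h0 | h0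
    · rw [← h0]
      rw [Real.zero_rpow (by positivity)]
      simp [le_of_lt (Real.rpow_pos_of_pos hM (p-1))]
    · have h1' : x ^ ((p + 1) / 2) = x * x ^ ((p - 1) / 2) := by
        rw [show (p + 1) / 2 = 1 + (p - 1) / 2 by ring, Real.rpow_add h0, Real.rpow_one]
      rw [h1']
      have h2' : x ^ ((p - 1) / 2) ≤ (M ^ 2) ^ ((p - 1) / 2) := by
        apply Real.rpow_le_rpow (le_of_lt h0) hxM (by positivity)
      have h3' : ((M:ℝ) ^ 2) ^ ((p - 1) / 2) = M ^ (p - 1) := by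
        rw [← Real.rpow_natCast M 2, ← Real.rpow_mul hM.le]
        congr 1
        push_cast
        ring
      rw [h3'] at h2'
      exact mul_le_mul_of_nonneg_left h2' h0.le
  have hMp : M ^ (1 - p) * (x * M ^ (p - 1)) = x := by
    rw [mul_comm x, ← mul_assoc, ← Real.rpow_add hM]
    norm_num
  have hMpos : (0:ℝ) < M ^ (1 - p) := Real.rpow_pos_of_pos hM _
  have hkey : x * ((p - 1) / (2 * (p + 1))) ≤ E := by
    have h4 : M ^ (1 - p) * x ^ ((p + 1) / 2) ≤ x := by
      calc M ^ (1 - p) * x ^ ((p + 1) / 2) ≤ M ^ (1 - p) * (x * M ^ (p - 1)) :=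
            mul_le_mul_of_nonneg_left hxb hMpos.le
        _ = x := hMp
    have h5 : x / 2 - x / (p + 1) ≤ x / 2 - M ^ (1 - p) * x ^ ((p + 1) / 2) / (p + 1) := by
      have h4' : M ^ (1 - p) * x ^ ((p + 1) / 2) / (p + 1) ≤ x / (p + 1) := by
        exact div_le_div_of_nonneg_right h4 hp1.le
      linarith [h4']
    have h6 : x / 2 - x / (p + 1) = x * ((p - 1) / (2 * (p + 1))) := by
      field_simp; ring
    linarith [h6 ▸ le_trans h5 h1]
  have hEQpos : (0:ℝ) < (p - 1) / (2 * (p + 1)) * M ^ 2 := by positivity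
  constructor
  · rw [div_mul_eq_mul_div, le_div_iff₀ hEQpos]
    nlinarith [mul_le_mul_of_nonneg_right hkey (sq_nonneg M)]
  · intro hxe hE
    rw [hxe] at hkey
    nlinarith [hkey]
end

section
/- Let n ≥ 2 be an integer. There exists a constant C > 0 such that for all r ≥ 0, ∫₀^π (cosh r − cos θ · sinh r)^{1−n} · (sin θ)^{n−2} dθ ≤ C; that is, the spherical integral ∫_{S^{n−1}} [x, (1, ω)]^{−(n−1)} dω is bounded uniformly over x ∈ ℍⁿ. -/
open Real intervalIntegral MeasureTheory

lemma aux_arctan (A B : ℝ) (hA : 0 < A) (hB : 0 < B) :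
    (∫ θ in (0:ℝ)..Real.pi, (A + B * θ ^ 2)⁻¹) ≤ Real.pi / Real.sqrt (A * B) := by
  have hdiv : (0:ℝ) < B / A := div_pos hB hA
  set k := Real.sqrt (B / A) with hkdef
  have hk : (0:ℝ) < k := Real.sqrt_pos.2 hdiv
  have hk2 : k ^ 2 = B / A := Real.sq_sqrt hdiv.le
  have h1 : ∀ θ : ℝ, (A + B * θ ^ 2)⁻¹ = A⁻¹ * (1 / (1 + (k * θ) ^ 2)) := by
    intro θ
    rw [mul_pow, hk2]
    have h : (0:ℝ) < A + B * θ ^ 2 := by positivity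
    field_simp
  have h2 : (∫ θ in (0:ℝ)..Real.pi, (A + B * θ ^ 2)⁻¹)
      = A⁻¹ * (k⁻¹ * (Real.arctan (k * Real.pi) - Real.arctan (k * 0))) := by
    rw [intervalIntegral.integral_congr (g := fun θ => A⁻¹ * (1 / (1 + (k*θ)^2)))
        (fun θ _ => h1 θ), intervalIntegral.integral_const_mul,
      intervalIntegral.integral_comp_mul_left (fun x => 1/(1+x^2)) hk.ne',
      integral_one_div_one_add_sq]
    simp [smul_eq_mul]
  rw [h2]
  have hAk : A * k = Real.sqrt (A * B) := by
    rw [hkdef, ← Real.sqrt_sq hA.le, ← Real.sqrt_mul (by positivity)]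
    congr 1
    field_simp
    ring_nf; rw [Real.sq_sqrt (by positivity)]
  have harc : Real.arctan (k * Real.pi) - Real.arctan (k * 0) ≤ Real.pi / 2 := by
    simp only [mul_zero, Real.arctan_zero, sub_zero]
    exact (Real.arctan_lt_pi_div_two _).le
  have hpos : (0:ℝ) < Real.sqrt (A * B) := Real.sqrt_pos.2 (by positivity)
  calc A⁻¹ * (k⁻¹ * (Real.arctan (k * Real.pi) - Real.arctan (k * 0)))
      ≤ A⁻¹ * (k⁻¹ * (Real.pi / 2)) := by
        apply mul_le_mul_of_nonneg_left _ (by positivity)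
        exact mul_le_mul_of_nonneg_left harc (by positivity)
    _ = Real.pi / 2 / (A * k) := by rw [div_eq_mul_inv, div_eq_mul_inv, mul_inv]; ring
    _ ≤ Real.pi / Real.sqrt (A * B) := by
        rw [hAk]
        gcongr
        linarith [Real.pi_pos]

theorem stmt_7 (n : ℕ) (hn : 2 ≤ n) :
    ∃ C > 0, ∀ r : ℝ, 0 ≤ r →
      (∫ θ in (0 : ℝ)..Real.pi,
        (Real.cosh r - Real.cos θ * Real.sinh r) ^ ((1 : ℝ) - n) * (Real.sin θ) ^ (n - 2)) ≤ C := by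
  refine ⟨Real.pi * Real.exp 1 + 2 * Real.pi ^ 2, by positivity, ?_⟩
  intro r hr
  have hs : 0 ≤ Real.sinh r := Real.sinh_nonneg_iff.2 hr
  set a : ℝ → ℝ := fun θ => Real.cosh r - Real.cos θ * Real.sinh r with ha_def
  have haexp : ∀ θ, Real.exp (-r) ≤ a θ := by
    intro θ
    simp only [ha_def]
    nlinarith [Real.cosh_sub_sinh r, Real.cos_le_one θ, Real.neg_one_le_cos θ, hs]
  have hapos : ∀ θ, 0 < a θ := fun θ => lt_of_lt_of_le (Real.exp_pos _) (haexp θ)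
  have hsin : ∀ θ, Real.sin θ ≤ a θ := by
    intro θ
    simp only [ha_def]
    nlinarith [sq_nonneg (Real.cos θ - Real.sin θ * Real.sinh r), Real.sin_sq_add_cos_sq θ,
      Real.cosh_sq r, Real.cosh_pos r,
      sq_nonneg (Real.cosh r + Real.cos θ * Real.sinh r + Real.sin θ)]
  have hca : Continuous a := by
    simp only [ha_def]
    fun_prop
  have hcainv : Continuous fun θ => (a θ)⁻¹ :=
    hca.inv₀ fun θ => (hapos θ).ne'
  -- rewrite the rpow integrand
  have hrw : ∀ θ : ℝ, (a θ) ^ ((1:ℝ) - n) * (Real.sin θ) ^ (n - 2)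
      = ((a θ) ^ (n - 1 : ℕ))⁻¹ * (Real.sin θ) ^ (n - 2) := by
    intro θ
    congr 1
    have h : ((1:ℝ) - n) = -((n - 1 : ℕ) : ℝ) := by
      push_cast [Nat.cast_sub (by omega : 1 ≤ n)]
      ring
    rw [h, Real.rpow_neg (hapos θ).le, Real.rpow_natCast]
  rw [intervalIntegral.integral_congr (g := fun θ => ((a θ) ^ (n - 1 : ℕ))⁻¹ * (Real.sin θ) ^ (n - 2))
      (fun θ _ => hrw θ)]
  have hcg : Continuous fun θ => ((a θ) ^ (n - 1 : ℕ))⁻¹ * (Real.sin θ) ^ (n - 2) :=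
    ((hca.pow _).inv₀ fun θ => pow_ne_zero _ (hapos θ).ne').mul (Real.continuous_sin.pow _)
  -- step 1: compare with ∫ (a θ)⁻¹
  have step1 : (∫ θ in (0:ℝ)..Real.pi, ((a θ) ^ (n - 1 : ℕ))⁻¹ * (Real.sin θ) ^ (n - 2))
      ≤ ∫ θ in (0:ℝ)..Real.pi, (a θ)⁻¹ := by
    apply intervalIntegral.integral_mono_on Real.pi_pos.le
      (hcg.intervalIntegrable _ _) (hcainv.intervalIntegrable _ _)
    intro θ hθ
    have hsin0 : 0 ≤ Real.sin θ := Real.sin_nonneg_of_nonneg_of_le_pi hθ.1 hθ.2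
    have hpow : Real.sin θ ^ (n - 2) ≤ (a θ) ^ (n - 2) := by
      exact pow_le_pow_left₀ hsin0 (hsin θ) _
    have hsplit : (a θ) ^ (n - 1 : ℕ) = (a θ) ^ (n - 2 : ℕ) * a θ := by
      rw [← pow_succ]
      congr 1
      omega
    rw [hsplit, mul_inv, mul_comm ((a θ) ^ (n-2:ℕ))⁻¹ (a θ)⁻¹, mul_assoc]
    have h1 : ((a θ) ^ (n - 2 : ℕ))⁻¹ * Real.sin θ ^ (n - 2) ≤ 1 := by
      rw [inv_mul_le_iff₀ (pow_pos (hapos θ) _), mul_one]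
      exact hpow
    calc (a θ)⁻¹ * (((a θ) ^ (n - 2 : ℕ))⁻¹ * Real.sin θ ^ (n - 2))
        ≤ (a θ)⁻¹ * 1 := mul_le_mul_of_nonneg_left h1 (inv_nonneg.2 (hapos θ).le)
      _ = (a θ)⁻¹ := mul_one _
  refine step1.trans ?_
  -- step 2: bound ∫ (a θ)⁻¹
  rcases le_or_gt r 1 with hr1 | hr1
  · -- small r : a θ ≥ exp (-1)
    have hbd : ∀ θ ∈ Set.Icc (0:ℝ) Real.pi, (a θ)⁻¹ ≤ Real.exp 1 := by
      intro θ _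
      calc (a θ)⁻¹ ≤ (Real.exp (-r))⁻¹ := by
            exact inv_anti₀ (Real.exp_pos _) (haexp θ)
        _ = Real.exp r := by rw [← Real.exp_neg, neg_neg]
        _ ≤ Real.exp 1 := Real.exp_le_exp.2 hr1
    have := intervalIntegral.integral_mono_on Real.pi_pos.le (hcainv.intervalIntegrable _ _)
      ((continuous_const.intervalIntegrable _ _ : IntervalIntegrable (fun _ : ℝ => Real.exp 1) MeasureTheory.volume 0 Real.pi)) hbd
    rw [intervalIntegral.integral_const, smul_eq_mul, sub_zero] at this
    nlinarith [Real.pi_pos, Real.exp_pos (1:ℝ), this]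
  · -- large r
    have hsinh : 0 < Real.sinh r := Real.sinh_pos_iff.2 (by linarith)
    set A := Real.exp (-r) with hA_def
    set B := 2 * Real.sinh r / Real.pi ^ 2 with hB_def
    have hA : 0 < A := Real.exp_pos _
    have hB : 0 < B := by
      apply div_pos (by linarith) (by positivity)
    have hptwise : ∀ θ ∈ Set.Icc (0:ℝ) Real.pi, (a θ)⁻¹ ≤ (A + B * θ ^ 2)⁻¹ := by
      intro θ hθ
      have habs : |θ| ≤ Real.pi := by
        rw [abs_of_nonneg hθ.1]; exact hθ.2
      have hcos := Real.cos_le_one_sub_mul_cos_sq habs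
      have hle : A + B * θ ^ 2 ≤ a θ := by
        simp only [ha_def, hA_def, hB_def]
        have hcsh := Real.cosh_sub_sinh r
        have hpi2 : (0:ℝ) < Real.pi ^ 2 := by positivity
        rw [div_mul_eq_mul_div, ← sub_nonneg]
        have key : (1 - Real.cos θ) * Real.sinh r ≥ 2 / Real.pi ^ 2 * θ ^ 2 * Real.sinh r := by
          nlinarith [hsinh]
        have : 2 * Real.sinh r * θ ^ 2 / Real.pi ^ 2 = 2 / Real.pi ^ 2 * θ ^ 2 * Real.sinh r := by
          field_simp
        nlinarith [key, hcsh]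
      exact inv_anti₀ (by positivity) hle
    have hcAB : Continuous fun θ : ℝ => (A + B * θ ^ 2)⁻¹ := by
      have hc : Continuous fun θ : ℝ => A + B * θ ^ 2 := by fun_prop
      exact hc.inv₀ fun θ => by positivity
    have hmono : (∫ θ in (0:ℝ)..Real.pi, (a θ)⁻¹)
        ≤ ∫ θ in (0:ℝ)..Real.pi, (A + B * θ ^ 2)⁻¹ :=
      intervalIntegral.integral_mono_on Real.pi_pos.le
        (hcainv.intervalIntegrable _ _) (hcAB.intervalIntegrable _ _) hptwise
    have harct := aux_arctan A B hA hB
    -- lower bound on sqrt (A*B)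
    have e1 : Real.exp (-r) * Real.exp r = 1 := by rw [← Real.exp_add]; simp
    have e2 : Real.exp (-r) * Real.exp (-r) = Real.exp (-(2*r)) := by
      rw [← Real.exp_add]; ring_nf
    have hprod : 2 * Real.exp (-r) * Real.sinh r = 1 - Real.exp (-(2*r)) := by
      rw [Real.sinh_eq]
      field_simp
      linear_combination e1 - e2
    have hexp2 : Real.exp (-(2*r)) ≤ 1/2 := by
      have h1 : Real.exp (-(2*r)) ≤ Real.exp (-2) := Real.exp_le_exp.2 (by linarith)
      have h2 : (2:ℝ) ≤ Real.exp 2 := by nlinarith [Real.add_one_le_exp (2:ℝ)]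
      have h3 : Real.exp (-2) ≤ 1/2 := by
        rw [Real.exp_neg]
        rw [inv_le_comm₀ (Real.exp_pos _) (by norm_num)]
        linarith
      linarith
    have hAB : (1/(2*Real.pi))^2 ≤ A * B := by
      have hABval : A * B = (2 * Real.exp (-r) * Real.sinh r) / Real.pi ^ 2 := by
        simp only [hA_def, hB_def]
        field_simp
      rw [hABval, hprod]
      rw [div_pow, one_pow, mul_pow]
      rw [div_le_div_iff₀ (by positivity) (by positivity)]
      nlinarith [Real.pi_pos, sq_nonneg Real.pi]
    have hsqrt : 1/(2*Real.pi) ≤ Real.sqrt (A * B) :=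
      (Real.le_sqrt (by positivity) (by positivity)).2 hAB
    have hfinal : Real.pi / Real.sqrt (A * B) ≤ 2 * Real.pi ^ 2 := by
      have h0 : (0:ℝ) < 1/(2*Real.pi) := by positivity
      calc Real.pi / Real.sqrt (A * B) ≤ Real.pi / (1/(2*Real.pi)) :=
            div_le_div_of_nonneg_left Real.pi_pos.le h0 hsqrt
        _ = 2 * Real.pi ^ 2 := by field_simp
    nlinarith [hmono, harct, hfinal, Real.pi_pos, Real.exp_pos (1:ℝ)]
end

section
/- Let δ > 0 and let y : I → ℝ be a twice continuously differentiable function on an open interval I containing 0, with y(t) > 0 for all t ∈ I and y''(t) ≤ −δ for all t ∈ I. Then I is bounded; more precisely, I ⊆ (T_−, T_+) with T_+ ≤ (y'(0) + √(y'(0)² + 2δ·y(0)))/δ and a symmetric bound for T_−. -/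
theorem stmt_14 (δ : ℝ) (hδ : 0 < δ) (a b : ℝ) (ha : a < 0) (hb : 0 < b)
    (y : ℝ → ℝ) (hy : ContDiffOn ℝ 2 y (Set.Ioo a b))
    (hpos : ∀ t ∈ Set.Ioo a b, 0 < y t)
    (hconc : ∀ t ∈ Set.Ioo a b, deriv (deriv y) t ≤ -δ) :
    b ≤ (deriv y 0 + Real.sqrt ((deriv y 0) ^ 2 + 2 * δ * y 0)) / δ ∧
    -((-(deriv y 0) + Real.sqrt ((deriv y 0) ^ 2 + 2 * δ * y 0)) / δ) ≤ a := by
  have hI : IsOpen (Set.Ioo a b) := isOpen_Ioo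
  have h0 : (0:ℝ) ∈ Set.Ioo a b := ⟨ha, hb⟩
  set v := deriv y 0 with hv
  -- differentiability facts
  have hy1 : DifferentiableOn ℝ y (Set.Ioo a b) := hy.differentiableOn (by norm_num)
  have hyd : ContDiffOn ℝ 1 (deriv y) (Set.Ioo a b) := by
    have := hy.deriv_of_isOpen hI (m := 1) (by norm_num)
    exact this
  have hyd1 : DifferentiableOn ℝ (deriv y) (Set.Ioo a b) :=
    hyd.differentiableOn one_ne_zero
  have hydiffAt : ∀ t ∈ Set.Ioo a b, DifferentiableAt ℝ y t := fun t ht =>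
    (hy1.differentiableAt (hI.mem_nhds ht))
  have hyddiffAt : ∀ t ∈ Set.Ioo a b, DifferentiableAt ℝ (deriv y) t := fun t ht =>
    (hyd1.differentiableAt (hI.mem_nhds ht))
  -- g' := fun t => deriv y t + δ * t is antitone on I
  have hG' : AntitoneOn (fun t => deriv y t + δ * t) (Set.Ioo a b) := by
    apply antitoneOn_of_deriv_nonpos (convex_Ioo a b)
    · exact (hyd1.continuousOn.add (continuousOn_const.mul continuousOn_id))
    · rw [hI.interior_eq]
      exact hyd1.add ((differentiable_id.const_mul δ).differentiableOn)
    · intro x hx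
      rw [hI.interior_eq] at hx
      have hd : HasDerivAt (fun t => deriv y t + δ * t) (deriv (deriv y) x + δ) x := by
        have h1 := (hyddiffAt x hx).hasDerivAt
        have h2 : HasDerivAt (fun t : ℝ => δ * t) δ x := by
          simpa using (hasDerivAt_id x).const_mul δ
        exact h1.add h2
      rw [hd.deriv]
      have := hconc x hx
      linarith
  -- the comparison function g
  set g : ℝ → ℝ := fun t => y t - v * t + δ/2 * t^2 with hg
  have hgderiv : ∀ x ∈ Set.Ioo a b, deriv g x = deriv y x - v + δ * x := by
    intro x hx
    have hd : HasDerivAt g (deriv y x - v + δ * x) x := by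
      have h1 := (hydiffAt x hx).hasDerivAt
      have h2 : HasDerivAt (fun t : ℝ => v * t) v x := by
        simpa using (hasDerivAt_id x).const_mul v
      have h3 : HasDerivAt (fun t : ℝ => δ/2 * t^2) (δ * x) x := by
        have := (hasDerivAt_pow 2 x).const_mul (δ/2)
        simpa using this.congr_deriv (by ring)
      exact (h1.sub h2).add h3
    exact hd.deriv
  have hgcont : ContinuousOn g (Set.Ioo a b) := by
    apply ContinuousOn.add
    · exact hy1.continuousOn.sub (continuousOn_const.mul continuousOn_id)
    · exact continuousOn_const.mul (continuousOn_pow 2)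
  have hgdiff : DifferentiableOn ℝ g (Set.Ioo a b) := by
    apply DifferentiableOn.add
    · exact hy1.sub ((differentiable_id.const_mul v).differentiableOn)
    · exact ((differentiable_pow 2).const_mul (δ/2)).differentiableOn
  -- key estimate : g t ≤ g 0 on I
  have key : ∀ t ∈ Set.Ioo a b, g t ≤ g 0 := by
    intro t ht
    rcases le_or_gt 0 t with h0t | ht0
    · -- g antitone on Ico 0 b
      have hsub : Set.Ico (0:ℝ) b ⊆ Set.Ioo a b := fun x hx => ⟨lt_of_lt_of_le ha hx.1, hx.2⟩
      have hant : AntitoneOn g (Set.Ico 0 b) := by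
        apply antitoneOn_of_deriv_nonpos (convex_Ico 0 b)
        · exact hgcont.mono hsub
        · rw [interior_Ico]
          exact hgdiff.mono (fun x hx => hsub ⟨le_of_lt hx.1, hx.2⟩)
        · intro x hx
          rw [interior_Ico] at hx
          have hxI : x ∈ Set.Ioo a b := hsub ⟨le_of_lt hx.1, hx.2⟩
          rw [hgderiv x hxI]
          have := hG' h0 hxI (le_of_lt hx.1)
          simp only at this
          linarith
      exact hant ⟨le_rfl, hb⟩ ⟨h0t, ht.2⟩ h0t
    · -- g monotone on Ioc a 0
      have hsub : Set.Ioc a (0:ℝ) ⊆ Set.Ioo a b := fun x hx => ⟨hx.1, lt_of_le_of_lt hx.2 hb⟩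
      have hmon : MonotoneOn g (Set.Ioc a 0) := by
        apply monotoneOn_of_deriv_nonneg (convex_Ioc a 0)
        · exact hgcont.mono hsub
        · rw [interior_Ioc]
          exact hgdiff.mono (fun x hx => hsub ⟨hx.1, le_of_lt hx.2⟩)
        · intro x hx
          rw [interior_Ioc] at hx
          have hxI : x ∈ Set.Ioo a b := hsub ⟨hx.1, le_of_lt hx.2⟩
          rw [hgderiv x hxI]
          have := hG' hxI h0 (le_of_lt hx.2)
          simp only at this
          linarith
      exact hmon ⟨ht.1, le_of_lt ht0⟩ ⟨ha, le_rfl⟩ (le_of_lt ht0)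
  have hP : ∀ t ∈ Set.Ioo a b, 0 < y 0 + v * t - δ/2 * t^2 := by
    intro t ht
    have h1 := hpos t ht
    have h2 := key t ht
    simp only [hg] at h2
    nlinarith
  -- algebra
  set s := Real.sqrt (v ^ 2 + 2 * δ * y 0) with hs
  have hy0 := hpos 0 h0
  have hs2 : s ^ 2 = v ^ 2 + 2 * δ * y 0 := Real.sq_sqrt (by nlinarith)
  have hs0 : (0:ℝ) ≤ s := Real.sqrt_nonneg _
  constructor
  · by_contra hcon
    push_neg at hcon
    have hT0 : 0 < (v + s) / δ := by
      apply div_pos _ hδ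
      nlinarith
    set t := ((v + s) / δ + b) / 2 with htdef
    have ht1 : (v + s) / δ < t := by rw [htdef]; linarith
    have ht2 : t < b := by rw [htdef]; linarith
    have htI : t ∈ Set.Ioo a b := ⟨by linarith, ht2⟩
    have hPt := hP t htI
    have h1 : s < δ * t - v := by
      rw [div_lt_iff₀ hδ] at ht1
      linarith
    have h2 : s ^ 2 < (δ * t - v) ^ 2 := by nlinarith
    nlinarith [mul_pos hδ hPt]
  · by_contra hcon
    push_neg at hcon
    have hS0 : (v - s) / δ < 0 := by
      apply div_neg_of_neg_of_pos _ hδ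
      nlinarith
    have hcon' : a < (v - s) / δ := by
      have : -((-v + s) / δ) = (v - s) / δ := by ring
      linarith [this ▸ hcon]
    set t := (a + (v - s) / δ) / 2 with htdef
    have ht1 : a < t := by rw [htdef]; linarith
    have ht2 : t < (v - s) / δ := by rw [htdef]; linarith
    have htI : t ∈ Set.Ioo a b := ⟨ht1, by linarith⟩
    have hPt := hP t htI
    have h1 : s < v - δ * t := by
      rw [lt_div_iff₀ hδ] at ht2
      linarith
    have h2 : s ^ 2 < (v - δ * t) ^ 2 := by nlinarith
    nlinarith [mul_pos hδ hPt]
end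

section
/- For every integer n ≥ 2 and every real p ≥ 1 + 4/n, the function F(r) = (n−1)·(r²/sinh²r)·((p−1)(n−1)cosh²r + 2) + 2(n−1)(p−4)·(r·cosh r/sinh r) + (p − 5) is nonnegative for all r > 0; moreover F is nondecreasing in p for fixed r, so it suffices to prove the case p = 1 + 4/n, which is equivalent to (2n−2)r²cosh²r + n·r² − (3n−4)·r·cosh r·sinh r − 2·sinh²r ≥ 0. -/
private lemma derivNonnegAux {f f' : ℝ → ℝ} (hf : ∀ x, HasDerivAt f (f' x) x)
    (h0 : f 0 = 0) (h' : ∀ x, 0 ≤ x → 0 ≤ f' x) {x : ℝ} (hx : 0 ≤ x) : 0 ≤ f x := by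
  have hm : MonotoneOn f (Set.Ici 0) := by
    apply monotoneOn_of_deriv_nonneg (convex_Ici 0)
    · exact fun y _ => (hf y).continuousAt.continuousWithinAt
    · exact fun y _ => (hf y).differentiableAt.differentiableWithinAt
    · intro y hy
      rw [(hf y).deriv]
      exact h' y (le_of_lt (by simpa using hy))
  simpa [h0] using hm Set.self_mem_Ici hx hx

private lemma L1 {x : ℝ} (hx : 0 ≤ x) :
    0 ≤ x * Real.cosh x + 2 * x - 3 * Real.sinh x := by
  have d2 : ∀ t : ℝ, HasDerivAt (fun y : ℝ => y * Real.cosh y - Real.sinh y)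
      (t * Real.sinh t) t := fun t =>
    (((hasDerivAt_id t).mul (Real.hasDerivAt_cosh t)).sub
      (Real.hasDerivAt_sinh t)).congr_deriv (by push_cast [id_eq]; ring)
  have h2 : ∀ y : ℝ, 0 ≤ y → 0 ≤ y * Real.cosh y - Real.sinh y := fun y hy =>
    derivNonnegAux d2 (by simp)
      (fun t ht => mul_nonneg ht (Real.sinh_nonneg_iff.2 ht)) hy
  have d1 : ∀ t : ℝ, HasDerivAt (fun y : ℝ => y * Real.sinh y + 2 - 2 * Real.cosh y)
      (t * Real.cosh t - Real.sinh t) t := fun t =>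
    ((((hasDerivAt_id t).mul (Real.hasDerivAt_sinh t)).add_const 2).sub
      ((Real.hasDerivAt_cosh t).const_mul 2)).congr_deriv (by push_cast [id_eq]; ring)
  have h1 : ∀ y : ℝ, 0 ≤ y → 0 ≤ y * Real.sinh y + 2 - 2 * Real.cosh y := fun y hy =>
    derivNonnegAux d1 (by simp) (fun t ht => h2 t ht) hy
  have d0 : ∀ t : ℝ, HasDerivAt (fun y : ℝ => y * Real.cosh y + 2 * y - 3 * Real.sinh y)
      (t * Real.sinh t + 2 - 2 * Real.cosh t) t := fun t =>
    ((((hasDerivAt_id t).mul (Real.hasDerivAt_cosh t)).add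
      ((hasDerivAt_id t).const_mul 2)).sub
      ((Real.hasDerivAt_sinh t).const_mul 3)).congr_deriv (by push_cast [id_eq]; ring)
  exact derivNonnegAux d0 (by simp) (fun t ht => h1 t ht) hx

private lemma L2 {x : ℝ} (hx : 0 ≤ x) :
    0 ≤ x ^ 2 * Real.cosh x + 3 * x ^ 2 - 2 * x * Real.sinh x - 4 * Real.cosh x + 4 := by
  have d2 : ∀ t : ℝ,
      HasDerivAt (fun y : ℝ => y ^ 2 * Real.sinh y + 4 * y * Real.cosh y - 4 * Real.sinh y)
        (t ^ 2 * Real.cosh t + 6 * t * Real.sinh t) t := fun t => by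
    have h := (((hasDerivAt_pow 2 t).mul (Real.hasDerivAt_sinh t)).add
      (((hasDerivAt_id t).const_mul 4).mul (Real.hasDerivAt_cosh t))).sub
      ((Real.hasDerivAt_sinh t).const_mul 4)
    exact h.congr_deriv (by push_cast [id_eq]; ring)
  have h2 : ∀ y : ℝ, 0 ≤ y →
      0 ≤ y ^ 2 * Real.sinh y + 4 * y * Real.cosh y - 4 * Real.sinh y := fun y hy =>
    derivNonnegAux d2 (by simp) (fun t ht => by
      have hs := Real.sinh_nonneg_iff.2 ht
      have hc := (Real.cosh_pos (x := t)).le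
      positivity) hy
  have d1b : ∀ t : ℝ,
      HasDerivAt (fun y : ℝ => 2 * y * Real.sinh y + y ^ 2 * Real.cosh y + 6 - 6 * Real.cosh y)
        (t ^ 2 * Real.sinh t + 4 * t * Real.cosh t - 4 * Real.sinh t) t := fun t => by
    have h := (((((hasDerivAt_id t).const_mul 2).mul (Real.hasDerivAt_sinh t)).add
      ((hasDerivAt_pow 2 t).mul (Real.hasDerivAt_cosh t))).add_const 6).sub
      ((Real.hasDerivAt_cosh t).const_mul 6)
    exact h.congr_deriv (by push_cast [id_eq]; ring)
  have h1b : ∀ y : ℝ, 0 ≤ y →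
      0 ≤ 2 * y * Real.sinh y + y ^ 2 * Real.cosh y + 6 - 6 * Real.cosh y := fun y hy =>
    derivNonnegAux d1b (by simp) (fun t ht => h2 t ht) hy
  have d1 : ∀ t : ℝ,
      HasDerivAt (fun y : ℝ => y ^ 2 * Real.sinh y + 6 * y - 6 * Real.sinh y)
        (2 * t * Real.sinh t + t ^ 2 * Real.cosh t + 6 - 6 * Real.cosh t) t := fun t => by
    have h := (((hasDerivAt_pow 2 t).mul (Real.hasDerivAt_sinh t)).add
      ((hasDerivAt_id t).const_mul 6)).sub ((Real.hasDerivAt_sinh t).const_mul 6)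
    exact h.congr_deriv (by push_cast [id_eq]; ring)
  have h1 : ∀ y : ℝ, 0 ≤ y → 0 ≤ y ^ 2 * Real.sinh y + 6 * y - 6 * Real.sinh y := fun y hy =>
    derivNonnegAux d1 (by simp) (fun t ht => h1b t ht) hy
  have d0 : ∀ t : ℝ,
      HasDerivAt (fun y : ℝ =>
          y ^ 2 * Real.cosh y + 3 * y ^ 2 - 2 * y * Real.sinh y - 4 * Real.cosh y + 4)
        (t ^ 2 * Real.sinh t + 6 * t - 6 * Real.sinh t) t := fun t => by
    have h := (((((hasDerivAt_pow 2 t).mul (Real.hasDerivAt_cosh t)).add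
      ((hasDerivAt_pow 2 t).const_mul 3)).sub
      (((hasDerivAt_id t).const_mul 2).mul (Real.hasDerivAt_sinh t))).sub
      ((Real.hasDerivAt_cosh t).const_mul 4)).add_const 4
    exact h.congr_deriv (by push_cast [id_eq]; ring)
  exact derivNonnegAux d0 (by simp) (fun t ht => h1 t ht) hx

theorem stmt_17 (n : ℕ) (hn : 2 ≤ n) (p : ℝ) (hp : 1 + 4 / (n : ℝ) ≤ p) :
    let F : ℝ → ℝ → ℝ := fun q r =>
      ((n : ℝ) - 1) * (r ^ 2 / (Real.sinh r) ^ 2) * ((q - 1) * ((n : ℝ) - 1) * (Real.cosh r) ^ 2 + 2)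
        + 2 * ((n : ℝ) - 1) * (q - 4) * (r * Real.cosh r / Real.sinh r) + (q - 5)
    (∀ r : ℝ, 0 < r → 0 ≤ F p r) ∧
    (∀ r : ℝ, 0 < r → ∀ q₁ q₂ : ℝ, q₁ ≤ q₂ → F q₁ r ≤ F q₂ r) ∧
    (∀ r : ℝ, 0 < r →
      (0 ≤ F (1 + 4 / (n : ℝ)) r ↔
        0 ≤ (2 * (n : ℝ) - 2) * r ^ 2 * (Real.cosh r) ^ 2 + (n : ℝ) * r ^ 2
              - (3 * (n : ℝ) - 4) * r * Real.cosh r * Real.sinh r - 2 * (Real.sinh r) ^ 2)) := by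
  intro F
  have hF : ∀ q r : ℝ, F q r =
      ((n : ℝ) - 1) * (r ^ 2 / (Real.sinh r) ^ 2) * ((q - 1) * ((n : ℝ) - 1) * (Real.cosh r) ^ 2 + 2)
        + 2 * ((n : ℝ) - 1) * (q - 4) * (r * Real.cosh r / Real.sinh r) + (q - 5) :=
    fun _ _ => rfl
  have hn2 : (2 : ℝ) ≤ (n : ℝ) := by exact_mod_cast hn
  have hnpos : (0 : ℝ) < (n : ℝ) := by linarith
  have part2 : ∀ r : ℝ, 0 < r → ∀ q₁ q₂ : ℝ, q₁ ≤ q₂ → F q₁ r ≤ F q₂ r := by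
    intro r hr q₁ q₂ hq
    have hs : 0 < Real.sinh r := Real.sinh_pos_iff.2 hr
    have hs' : Real.sinh r ≠ 0 := ne_of_gt hs
    have key : F q₂ r - F q₁ r
        = (q₂ - q₁) * (((n : ℝ) - 1) * (r * Real.cosh r / Real.sinh r) + 1) ^ 2 := by
      rw [hF, hF]; field_simp; ring
    have hprod := mul_nonneg (sub_nonneg.2 hq)
      (sq_nonneg (((n : ℝ) - 1) * (r * Real.cosh r / Real.sinh r) + 1))
    rw [← sub_nonneg, key]
    exact hprod
  have part3 : ∀ r : ℝ, 0 < r →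
      (0 ≤ F (1 + 4 / (n : ℝ)) r ↔
        0 ≤ (2 * (n : ℝ) - 2) * r ^ 2 * (Real.cosh r) ^ 2 + (n : ℝ) * r ^ 2
              - (3 * (n : ℝ) - 4) * r * Real.cosh r * Real.sinh r - 2 * (Real.sinh r) ^ 2) := by
    intro r hr
    have hs : 0 < Real.sinh r := Real.sinh_pos_iff.2 hr
    have hs' : Real.sinh r ≠ 0 := ne_of_gt hs
    have hn' : (n : ℝ) ≠ 0 := ne_of_gt hnpos
    have key : F (1 + 4 / (n : ℝ)) r
        = (2 * ((n : ℝ) - 1) / ((n : ℝ) * (Real.sinh r) ^ 2)) *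
          ((2 * (n : ℝ) - 2) * r ^ 2 * (Real.cosh r) ^ 2 + (n : ℝ) * r ^ 2
            - (3 * (n : ℝ) - 4) * r * Real.cosh r * Real.sinh r - 2 * (Real.sinh r) ^ 2) := by
      rw [hF]; field_simp; ring
    rw [key]
    have hk : 0 < 2 * ((n : ℝ) - 1) / ((n : ℝ) * (Real.sinh r) ^ 2) := by
      have : (0:ℝ) < (n : ℝ) - 1 := by linarith
      positivity
    exact mul_nonneg_iff_of_pos_left hk
  refine ⟨?_, part2, part3⟩
  intro r hr
  have hG : 0 ≤ (2 * (n : ℝ) - 2) * r ^ 2 * (Real.cosh r) ^ 2 + (n : ℝ) * r ^ 2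
      - (3 * (n : ℝ) - 4) * r * Real.cosh r * Real.sinh r - 2 * (Real.sinh r) ^ 2 := by
    set c := Real.cosh r with hc
    set s := Real.sinh r with hsdef
    have h2r : (0 : ℝ) ≤ 2 * r := by linarith
    have hA := L1 h2r
    have hB := L2 h2r
    rw [Real.cosh_two_mul, Real.sinh_two_mul] at hA hB
    have hsq : c ^ 2 = s ^ 2 + 1 := Real.cosh_sq r
    have hA' : 0 ≤ 2 * r ^ 2 * c ^ 2 + r ^ 2 - 3 * r * c * s := by nlinarith [hr.le]
    have hB' : 0 ≤ r ^ 2 * c ^ 2 + r ^ 2 - r * c * s - s ^ 2 := by nlinarith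
    have keyG : (2 * (n : ℝ) - 2) * r ^ 2 * c ^ 2 + (n : ℝ) * r ^ 2
        - (3 * (n : ℝ) - 4) * r * c * s - 2 * s ^ 2
        = ((n : ℝ) - 2) * (2 * r ^ 2 * c ^ 2 + r ^ 2 - 3 * r * c * s)
          + 2 * (r ^ 2 * c ^ 2 + r ^ 2 - r * c * s - s ^ 2) := by ring
    rw [keyG]
    have := mul_nonneg (by linarith : (0:ℝ) ≤ (n : ℝ) - 2) hA'
    linarith
  have h0 : 0 ≤ F (1 + 4 / (n : ℝ)) r := (part3 r hr).2 hG
  exact le_trans h0 (part2 r hr _ _ hp)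
end
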